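/- For any N ≥ 3, there exist a countable set X, a cost c : X^N → (0,∞], a probability measure μ on X, and a finite-cost symmetric transport plan γ on X^N with all marginals equal to μ, such that γ is c-cyclically monotone but not optimal. -/

import Mathlib

open MeasureTheory
open scoped ENNReal

namespace Stmt18Aux

noncomputable section

def pt (N n : ℕ) (j : Fin N) : Fin N → ℕ := fun i => if i = j then n + 1 else n

def d0 (N : ℕ) : Fin N → ℕ := fun _ => 0

open Classical in
def c (N : ℕ) (x : Fin N → ℕ) : ℝ≥0∞ :=
  if ∃ k j, x = pt N (2 * k) j then 2
  else if (∃ k j, x = pt N (2 * k + 1) j) ∨ x = d0 N then 1 else ⊤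

def Q (N : ℕ) : ℝ≥0∞ := ((N - 1 : ℕ) : ℝ≥0∞)
def u (N : ℕ) : ℝ≥0∞ := (Q N)⁻¹
def t (N k : ℕ) : ℝ≥0∞ := ((N - 2 : ℕ) : ℝ≥0∞) * u N ^ (2 * k + 2)
def s (N k : ℕ) : ℝ≥0∞ := u N * t N k
def dm (N : ℕ) : ℝ≥0∞ := ((N - 2 : ℕ) : ℝ≥0∞) * u N

def γm (N : ℕ) : Measure (Fin N → ℕ) :=
  Measure.sum fun p : ℕ × Fin N => t N p.1 • Measure.dirac (pt N (2 * p.1) p.2)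

def γ'm (N : ℕ) : Measure (Fin N → ℕ) :=
  dm N • Measure.dirac (d0 N) +
    Measure.sum fun p : ℕ × Fin N => s N p.1 • Measure.dirac (pt N (2 * p.1 + 1) p.2)

def μm (N : ℕ) : Measure ℕ :=
  Measure.sum fun k : ℕ =>
    (Q N * t N k) • Measure.dirac (2 * k) + t N k • Measure.dirac (2 * k + 1)

section Arith

variable {N : ℕ}

lemma Q_ne_zero (hN : 3 ≤ N) : Q N ≠ 0 := by
  simp only [Q, ne_eq, Nat.cast_eq_zero]; omega

lemma Q_ne_top : Q N ≠ ⊤ := ENNReal.natCast_ne_top _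

lemma Qu (hN : 3 ≤ N) : Q N * u N = 1 := ENNReal.mul_inv_cancel (Q_ne_zero hN) Q_ne_top

lemma u_ne_zero : u N ≠ 0 := ENNReal.inv_ne_zero.2 Q_ne_top

lemma u_ne_top (hN : 3 ≤ N) : u N ≠ ⊤ := ENNReal.inv_ne_top.2 (Q_ne_zero hN)

lemma N2_ne_zero (hN : 3 ≤ N) : ((N - 2 : ℕ) : ℝ≥0∞) ≠ 0 := by
  simp only [ne_eq, Nat.cast_eq_zero]; omega

lemma t_eq (k : ℕ) : t N k = (((N - 2 : ℕ) : ℝ≥0∞) * u N ^ 2) * (u N ^ 2) ^ k := by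
  rw [t, ← pow_mul]; ring

lemma t_ne_top (hN : 3 ≤ N) (k : ℕ) : t N k ≠ ⊤ :=
  ENNReal.mul_ne_top (ENNReal.natCast_ne_top _) (ENNReal.pow_ne_top (u_ne_top hN))

lemma key (hN : 3 ≤ N) :
    (1 : ℝ≥0∞) - u N ^ 2 = (N : ℝ≥0∞) * ((N - 2 : ℕ) : ℝ≥0∞) * u N ^ 2 := by
  have h0 : (N * (N - 2) + 1 : ℕ) = (N - 1) ^ 2 := by
    obtain ⟨M, rfl⟩ := Nat.exists_eq_add_of_le hN
    have e1 : 3 + M - 2 = M + 1 := by omega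
    have e2 : 3 + M - 1 = M + 2 := by omega
    rw [e1, e2]; ring
  have h1 : (1 : ℝ≥0∞) = (N : ℝ≥0∞) * ((N - 2 : ℕ) : ℝ≥0∞) * u N ^ 2 + u N ^ 2 := by
    have h2 : (N : ℝ≥0∞) * ((N - 2 : ℕ) : ℝ≥0∞) * u N ^ 2 + u N ^ 2
        = ((N * (N - 2) + 1 : ℕ) : ℝ≥0∞) * u N ^ 2 := by
      push_cast; ring
    rw [h2, h0]
    have h3 : (((N - 1) ^ 2 : ℕ) : ℝ≥0∞) * u N ^ 2 = (Q N * u N) ^ 2 := by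
      rw [mul_pow, Q]; push_cast; ring
    rw [h3, Qu hN, one_pow]
  exact ENNReal.sub_eq_of_eq_add (ENNReal.pow_ne_top (u_ne_top hN)) h1

lemma sum_t (hN : 3 ≤ N) : ∑' k, (N : ℝ≥0∞) * t N k = 1 := by
  have h1 : ∀ k, (N : ℝ≥0∞) * t N k
      = ((N : ℝ≥0∞) * (((N - 2 : ℕ) : ℝ≥0∞) * u N ^ 2)) * (u N ^ 2) ^ k := by
    intro k; rw [t_eq]; ring
  simp only [h1]
  rw [ENNReal.tsum_mul_left, ENNReal.tsum_geometric, key hN]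
  rw [show (N : ℝ≥0∞) * (((N - 2 : ℕ) : ℝ≥0∞) * u N ^ 2)
      = (N : ℝ≥0∞) * ((N - 2 : ℕ) : ℝ≥0∞) * u N ^ 2 by ring]
  refine ENNReal.mul_inv_cancel ?_ ?_
  · refine mul_ne_zero (mul_ne_zero ?_ (N2_ne_zero hN)) (pow_ne_zero 2 u_ne_zero)
    simp only [ne_eq, Nat.cast_eq_zero]; omega
  · exact ENNReal.mul_ne_top (ENNReal.mul_ne_top (ENNReal.natCast_ne_top _)
      (ENNReal.natCast_ne_top _)) (ENNReal.pow_ne_top (u_ne_top hN))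

lemma sum_s (hN : 3 ≤ N) : ∑' k, (N : ℝ≥0∞) * s N k = u N := by
  have h1 : ∀ k, (N : ℝ≥0∞) * s N k = u N * ((N : ℝ≥0∞) * t N k) := by
    intro k; rw [s]; ring
  simp only [h1]
  rw [ENNReal.tsum_mul_left, sum_t hN, mul_one]

lemma s_eq_Qt (hN : 3 ≤ N) (k : ℕ) : s N k = Q N * t N (k + 1) := by
  have h : u N ^ (2 * (k + 1) + 2) = u N * u N ^ (2 * k + 3) := by ring
  rw [s, t, t, h]
  have h2 : u N ^ (2 * k + 3) = u N ^ (2 * k + 2) * u N := by ring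
  calc u N * (((N - 2 : ℕ) : ℝ≥0∞) * u N ^ (2 * k + 2))
      = ((N - 2 : ℕ) : ℝ≥0∞) * u N ^ (2 * k + 3) := by rw [h2]; ring
    _ = (Q N * u N) * (((N - 2 : ℕ) : ℝ≥0∞) * u N ^ (2 * k + 3)) := by rw [Qu hN]; ring
    _ = Q N * (((N - 2 : ℕ) : ℝ≥0∞) * (u N * u N ^ (2 * k + 3))) := by ring

lemma Qs (hN : 3 ≤ N) (k : ℕ) : Q N * s N k = t N k := by
  rw [s, ← mul_assoc, Qu hN, one_mul]

lemma dm_eq (hN : 3 ≤ N) : dm N = Q N * t N 0 := by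
  rw [dm, t]
  have h : u N ^ (2 * 0 + 2) = u N * u N := by ring
  rw [h]
  calc ((N - 2 : ℕ) : ℝ≥0∞) * u N
      = (Q N * u N) * (((N - 2 : ℕ) : ℝ≥0∞) * u N) := by rw [Qu hN]; ring
    _ = Q N * (((N - 2 : ℕ) : ℝ≥0∞) * (u N * u N)) := by ring

end Arith

section Meas

variable {N : ℕ}

lemma meall {α : Type*} [MeasurableSpace α] [MeasurableSingletonClass α] [Countable α]
    (S : Set α) : MeasurableSet S := (Set.to_countable S).measurableSet

open Classical in
lemma γm_apply (S : Set (Fin N → ℕ)) :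
    γm N S = ∑' k : ℕ, ∑ j : Fin N, (if pt N (2 * k) j ∈ S then t N k else 0) := by
  rw [γm, Measure.sum_apply _ (meall S), ENNReal.tsum_prod']
  refine tsum_congr fun k => ?_
  rw [tsum_fintype]
  refine Finset.sum_congr rfl fun j _ => ?_
  rw [Measure.smul_apply, Measure.dirac_apply]
  simp [Set.indicator_apply, mul_ite, mul_one, mul_zero]

open Classical in
lemma γ'm_apply (S : Set (Fin N → ℕ)) :
    γ'm N S = (if d0 N ∈ S then dm N else 0) +
      ∑' k : ℕ, ∑ j : Fin N, (if pt N (2 * k + 1) j ∈ S then s N k else 0) := by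
  rw [γ'm, Measure.add_apply, Measure.sum_apply _ (meall S), ENNReal.tsum_prod']
  congr 1
  · rw [Measure.smul_apply, Measure.dirac_apply]
    simp [Set.indicator_apply]
  · refine tsum_congr fun k => ?_
    rw [tsum_fintype]
    refine Finset.sum_congr rfl fun j _ => ?_
    rw [Measure.smul_apply, Measure.dirac_apply]
    simp [Set.indicator_apply, mul_ite, mul_one, mul_zero]

open Classical in
lemma μm_apply (S : Set ℕ) :
    μm N S = ∑' k : ℕ,
      ((if 2 * k ∈ S then Q N * t N k else 0) + (if 2 * k + 1 ∈ S then t N k else 0)) := by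
  rw [μm, Measure.sum_apply _ (meall S)]
  refine tsum_congr fun k => ?_
  rw [Measure.add_apply, Measure.smul_apply, Measure.smul_apply, Measure.dirac_apply,
    Measure.dirac_apply]
  simp [Set.indicator_apply, mul_ite, mul_one, mul_zero]

lemma exists_third (hN : 3 ≤ N) (j j' : Fin N) : ∃ i : Fin N, i ≠ j ∧ i ≠ j' := by
  have hcard : ({j, j'} : Finset (Fin N))ᶜ.Nonempty := by
    rw [← Finset.card_pos, Finset.card_compl]
    have h1 : ({j, j'} : Finset (Fin N)).card ≤ 2 :=
      le_trans (Finset.card_insert_le _ _) (by simp)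
    have h2 : Fintype.card (Fin N) = N := Fintype.card_fin N
    omega
  obtain ⟨i, hi⟩ := hcard
  simp only [Finset.mem_compl, Finset.mem_insert, Finset.mem_singleton, not_or] at hi
  exact ⟨i, hi.1, hi.2⟩

lemma pt_inj (hN : 3 ≤ N) {n n' : ℕ} {j j' : Fin N} (h : pt N n j = pt N n' j') :
    n = n' ∧ j = j' := by
  obtain ⟨i, hij, hij'⟩ := exists_third hN j j'
  have h1 := congrFun h i
  simp only [pt, if_neg hij, if_neg hij'] at h1
  subst h1
  refine ⟨rfl, ?_⟩
  by_contra hjj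
  have h2 := congrFun h j
  simp only [pt, if_true, eq_self_iff_true, if_neg hjj] at h2
  omega

lemma pt_ne_d0 {n : ℕ} {j : Fin N} : pt N n j ≠ d0 N := by
  intro h
  have := congrFun h j
  simp [pt, d0] at this

lemma c_even (k : ℕ) (j : Fin N) : c N (pt N (2 * k) j) = 2 := by
  rw [c, if_pos ⟨k, j, rfl⟩]

lemma c_odd (hN : 3 ≤ N) (k : ℕ) (j : Fin N) : c N (pt N (2 * k + 1) j) = 1 := by
  rw [c, if_neg, if_pos (Or.inl ⟨k, j, rfl⟩)]
  rintro ⟨k', j', h⟩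
  have := (pt_inj hN h).1
  omega

lemma c_d0 (hN : 3 ≤ N) : c N (d0 N) = 1 := by
  rw [c, if_neg, if_pos (Or.inr rfl)]
  rintro ⟨k', j', h⟩
  exact pt_ne_d0 h.symm

lemma c_pos (x : Fin N → ℕ) : 0 < c N x := by
  rw [c]
  split_ifs <;> norm_num

lemma c_top {x : Fin N → ℕ} (h1 : ¬∃ k j, x = pt N (2 * k) j)
    (h2 : ¬((∃ k j, x = pt N (2 * k + 1) j) ∨ x = d0 N)) : c N x = ⊤ := by
  rw [c, if_neg h1, if_neg h2]

lemma sum_pt_i (f : ℕ → ℝ≥0∞) (n : ℕ) (j : Fin N) :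
    ∑ i : Fin N, f (pt N n j i) = f (n + 1) + ((N - 1 : ℕ) : ℝ≥0∞) * f n := by
  rw [← Finset.sum_erase_add _ _ (Finset.mem_univ j)]
  have h1 : ∀ i ∈ Finset.univ.erase j, f (pt N n j i) = f n := by
    intro i hi
    simp [pt, (Finset.mem_erase.1 hi).1]
  rw [Finset.sum_congr rfl h1, Finset.sum_const,
    Finset.card_erase_of_mem (Finset.mem_univ j), Finset.card_univ, Fintype.card_fin,
    nsmul_eq_mul]
  simp [pt, add_comm]

lemma sum_pt_j (f : ℕ → ℝ≥0∞) (n : ℕ) (i : Fin N) :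
    ∑ j : Fin N, f (pt N n j i) = f (n + 1) + ((N - 1 : ℕ) : ℝ≥0∞) * f n := by
  rw [← Finset.sum_erase_add _ _ (Finset.mem_univ i)]
  have h1 : ∀ j ∈ Finset.univ.erase i, f (pt N n j i) = f n := by
    intro j hj
    simp [pt, Ne.symm (Finset.mem_erase.1 hj).1]
  rw [Finset.sum_congr rfl h1, Finset.sum_const,
    Finset.card_erase_of_mem (Finset.mem_univ i), Finset.card_univ, Fintype.card_fin,
    nsmul_eq_mul]
  simp [pt, add_comm]

end Meas

section Main

variable {N : ℕ}

lemma const_sum (a : ℝ≥0∞) : ∑ _j : Fin N, a = (N : ℝ≥0∞) * a := by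
  rw [Finset.sum_const, Finset.card_univ, Fintype.card_fin, nsmul_eq_mul]

lemma cast_sub_one (hN : 3 ≤ N) : ((N - 2 : ℕ) : ℝ≥0∞) + 1 = ((N - 1 : ℕ) : ℝ≥0∞) := by
  have h : (N - 2 + 1 : ℕ) = N - 1 := by omega
  exact_mod_cast congrArg (fun m : ℕ => (m : ℝ≥0∞)) h

lemma cast_Q_add_one (hN : 3 ≤ N) : ((N - 1 : ℕ) : ℝ≥0∞) + 1 = (N : ℝ≥0∞) := by
  have h : (N - 1 + 1 : ℕ) = N := by omega
  exact_mod_cast congrArg (fun m : ℕ => (m : ℝ≥0∞)) h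

lemma dmu (hN : 3 ≤ N) : dm N + u N = 1 := by
  rw [dm]
  calc ((N - 2 : ℕ) : ℝ≥0∞) * u N + u N = (((N - 2 : ℕ) : ℝ≥0∞) + 1) * u N := by ring
    _ = Q N * u N := by rw [cast_sub_one hN, Q]
    _ = 1 := Qu hN

lemma γm_prob (hN : 3 ≤ N) : IsProbabilityMeasure (γm N) := by
  constructor
  rw [γm_apply]
  simp only [Set.mem_univ, if_true]
  have h1 : ∀ k, ∑ _j : Fin N, t N k = (N : ℝ≥0∞) * t N k := fun k => const_sum _
  simp only [h1]
  exact sum_t hN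

lemma μm_prob (hN : 3 ≤ N) : IsProbabilityMeasure (μm N) := by
  constructor
  rw [μm_apply]
  simp only [Set.mem_univ, if_true]
  have h1 : ∀ k, Q N * t N k + t N k = (N : ℝ≥0∞) * t N k := by
    intro k
    calc Q N * t N k + t N k = (Q N + 1) * t N k := by ring
      _ = (N : ℝ≥0∞) * t N k := by rw [Q, cast_Q_add_one hN]
  simp only [h1]
  exact sum_t hN

lemma γ'm_prob (hN : 3 ≤ N) : IsProbabilityMeasure (γ'm N) := by
  constructor
  rw [γ'm_apply]
  simp only [Set.mem_univ, if_true]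
  have h1 : ∀ k, ∑ _j : Fin N, s N k = (N : ℝ≥0∞) * s N k := fun k => const_sum _
  simp only [h1]
  rw [sum_s hN]
  exact dmu hN

lemma pt_comp (n : ℕ) (j : Fin N) (σ : Equiv.Perm (Fin N)) :
    (pt N n j) ∘ σ = pt N n (σ⁻¹ j) := by
  funext i
  simp only [pt, Function.comp_apply]
  refine if_congr ?_ rfl rfl
  rw [Equiv.Perm.inv_def]
  exact σ.apply_eq_iff_eq_symm_apply

open Classical in
lemma γm_symm (σ : Equiv.Perm (Fin N)) :
    Measure.map (fun x : Fin N → ℕ => x ∘ σ) (γm N) = γm N := by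
  refine Measure.ext_of_singleton fun x => ?_
  rw [Measure.map_apply (measurable_of_countable _) (meall _), γm_apply, γm_apply]
  simp only [Set.mem_preimage, Set.mem_singleton_iff]
  refine tsum_congr fun k => ?_
  have h1 : ∀ j : Fin N, (if pt N (2 * k) j ∘ σ = x then t N k else 0)
      = (fun j' : Fin N => if pt N (2 * k) j' = x then t N k else 0) (σ⁻¹ j) :=
    fun j => if_congr (by rw [pt_comp]) rfl rfl
  rw [Finset.sum_congr rfl fun j _ => h1 j]
  exact Equiv.sum_comp σ⁻¹ fun j' : Fin N => if pt N (2 * k) j' = x then t N k else 0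

open Classical in
lemma map_γm (hN : 3 ≤ N) (i : Fin N) :
    Measure.map (fun x : Fin N → ℕ => x i) (γm N) = μm N := by
  refine Measure.ext_of_singleton fun x => ?_
  rw [Measure.map_apply (measurable_of_countable _) (meall _), γm_apply, μm_apply]
  simp only [Set.mem_preimage, Set.mem_singleton_iff]
  refine tsum_congr fun k => ?_
  have h3 : ∑ j : Fin N, (if pt N (2 * k) j i = x then t N k else 0)
      = (if 2 * k + 1 = x then t N k else 0)
        + ((N - 1 : ℕ) : ℝ≥0∞) * (if 2 * k = x then t N k else 0) :=
    sum_pt_j (fun v => if v = x then t N k else 0) (2 * k) i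
  rw [h3, mul_ite, mul_zero, add_comm, ← Q]

open Classical in
lemma map_γ'm (hN : 3 ≤ N) (i : Fin N) :
    Measure.map (fun x : Fin N → ℕ => x i) (γ'm N) = μm N := by
  refine Measure.ext_of_singleton fun x => ?_
  rw [Measure.map_apply (measurable_of_countable _) (meall _), γ'm_apply, μm_apply]
  simp only [Set.mem_preimage, Set.mem_singleton_iff]
  have hd : (if d0 N i = x then dm N else 0) = (if 0 = x then dm N else 0) := by
    refine if_congr ?_ rfl rfl
    simp [d0]
  have h1 : ∀ k, (∑ j : Fin N, if pt N (2 * k + 1) j i = x then s N k else 0)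
      = (if 2 * k + 2 = x then s N k else 0)
        + (if 2 * k + 1 = x then t N k else 0) := by
    intro k
    have h3 : ∑ j : Fin N, (if pt N (2 * k + 1) j i = x then s N k else 0)
        = (if 2 * k + 1 + 1 = x then s N k else 0)
          + ((N - 1 : ℕ) : ℝ≥0∞) * (if 2 * k + 1 = x then s N k else 0) :=
      sum_pt_j (fun v => if v = x then s N k else 0) (2 * k + 1) i
    rw [h3, mul_ite, mul_zero, ← Q, Qs hN]
  have hA : (∑' k, (if 2 * k = x then Q N * t N k else 0))
      = (if 0 = x then dm N else 0) + ∑' k, (if 2 * k + 2 = x then s N k else 0) := by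
    rw [tsum_eq_zero_add' ENNReal.summable]
    congr 1
    · exact if_congr (by norm_num) (dm_eq hN).symm rfl
    · refine tsum_congr fun k => ?_
      rw [← s_eq_Qt hN k]
      exact if_congr (by omega) rfl rfl
  rw [hd, tsum_congr h1, ENNReal.tsum_add, ENNReal.tsum_add, hA]
  ring

lemma lint_γm (f : (Fin N → ℕ) → ℝ≥0∞) :
    ∫⁻ x, f x ∂(γm N) = ∑' k, ∑ j : Fin N, t N k * f (pt N (2 * k) j) := by
  rw [γm, lintegral_sum_measure, ENNReal.tsum_prod']
  refine tsum_congr fun k => ?_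
  rw [tsum_fintype]
  refine Finset.sum_congr rfl fun j _ => ?_
  rw [lintegral_smul_measure, lintegral_dirac]
  rfl

lemma lint_γ'm (f : (Fin N → ℕ) → ℝ≥0∞) :
    ∫⁻ x, f x ∂(γ'm N)
      = dm N * f (d0 N) + ∑' k, ∑ j : Fin N, s N k * f (pt N (2 * k + 1) j) := by
  rw [γ'm, lintegral_add_measure, lintegral_smul_measure, lintegral_dirac,
    lintegral_sum_measure, ENNReal.tsum_prod']
  congr 1
  refine tsum_congr fun k => ?_
  rw [tsum_fintype]
  refine Finset.sum_congr rfl fun j _ => ?_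
  rw [lintegral_smul_measure, lintegral_dirac]
  rfl

lemma cost_γm (hN : 3 ≤ N) : ∫⁻ x, c N x ∂(γm N) = 2 := by
  rw [lint_γm]
  simp only [c_even]
  have h1 : ∀ k, ∑ _j : Fin N, t N k * 2 = ((N : ℝ≥0∞) * t N k) * 2 := by
    intro k
    rw [const_sum]
    ring
  simp only [h1]
  rw [ENNReal.tsum_mul_right, sum_t hN, one_mul]

lemma cost_γ'm (hN : 3 ≤ N) : ∫⁻ x, c N x ∂(γ'm N) = 1 := by
  rw [lint_γ'm, c_d0 hN]
  simp only [c_odd hN, mul_one]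
  have h1 : ∀ k, ∑ _j : Fin N, s N k = (N : ℝ≥0∞) * s N k := fun k => const_sum _
  simp only [h1]
  rw [sum_s hN]
  exact dmu hN

end Main

section Mono

variable {N : ℕ}

def aN (N k : ℕ) : ℝ≥0∞ := (((N - 1) ^ 2 + 1 : ℕ) : ℝ≥0∞) ^ k

open Classical in
def φp (N n : ℕ) : ℝ≥0∞ := if Even n then aN N (n / 2) else 0

open Classical in
def φm (N n : ℕ) : ℝ≥0∞ := if Even n then 0 else Q N * aN N (n / 2)

lemma φp_even (k : ℕ) : φp N (2 * k) = aN N k := by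
  rw [φp, if_pos ⟨k, two_mul k⟩]
  congr 1
  omega

lemma φp_odd (k : ℕ) : φp N (2 * k + 1) = 0 := by
  rw [φp, if_neg (by rw [Nat.even_iff]; omega)]

lemma φm_even (k : ℕ) : φm N (2 * k) = 0 := by
  rw [φm, if_pos ⟨k, two_mul k⟩]

lemma φm_odd (k : ℕ) : φm N (2 * k + 1) = Q N * aN N k := by
  rw [φm, if_neg (by rw [Nat.even_iff]; omega)]
  congr 2
  omega

lemma φp_ne_top (n : ℕ) : φp N n ≠ ⊤ := by
  rw [φp]
  split_ifs
  · exact ENNReal.pow_ne_top (ENNReal.natCast_ne_top _)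
  · exact ENNReal.zero_ne_top

lemma aN_ge_one (k : ℕ) : 1 ≤ aN N k := by
  rw [aN, ← one_pow k]
  refine pow_le_pow_left₀ zero_le ?_ k
  exact_mod_cast Nat.one_le_iff_ne_zero.2 (by omega)

lemma Φp_evenpt (k : ℕ) (j : Fin N) :
    ∑ i : Fin N, φp N (pt N (2 * k) j i) = Q N * aN N k := by
  rw [sum_pt_i, φp_odd, φp_even, zero_add, ← Q]

lemma Φm_evenpt (k : ℕ) (j : Fin N) :
    ∑ i : Fin N, φm N (pt N (2 * k) j i) = Q N * aN N k := by
  rw [sum_pt_i, φm_odd, φm_even, mul_zero, add_zero]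

lemma Φp_oddpt (k : ℕ) (j : Fin N) :
    ∑ i : Fin N, φp N (pt N (2 * k + 1) j i) = aN N (k + 1) := by
  rw [sum_pt_i, φp_odd, mul_zero, add_zero]
  have h : 2 * k + 1 + 1 = 2 * (k + 1) := by omega
  rw [h, φp_even]

lemma Φm_oddpt (k : ℕ) (j : Fin N) :
    ∑ i : Fin N, φm N (pt N (2 * k + 1) j i) = Q N * (Q N * aN N k) := by
  rw [sum_pt_i, φm_odd]
  have h : 2 * k + 1 + 1 = 2 * (k + 1) := by omega
  rw [h, φm_even, zero_add, ← Q]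

lemma Φp_d0pt : ∑ i : Fin N, φp N (d0 N i) = (N : ℝ≥0∞) := by
  have h : ∀ i : Fin N, φp N (d0 N i) = 1 := by
    intro i
    have h0 : φp N 0 = 1 := by
      have := φp_even (N := N) 0
      simpa [aN] using this
    simpa [d0] using h0
  rw [Finset.sum_congr rfl fun i _ => h i, const_sum, mul_one]

lemma Φm_d0pt : ∑ i : Fin N, φm N (d0 N i) = 0 := by
  have h : ∀ i : Fin N, φm N (d0 N i) = 0 := by
    intro i
    have h0 : φm N 0 = 0 := by
      have := φm_even (N := N) 0
      simpa using this
    simpa [d0] using h0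
  rw [Finset.sum_congr rfl fun i _ => h i, Finset.sum_const, smul_zero]

lemma gap_odd (hN : 3 ≤ N) (k : ℕ) : Q N * (Q N * aN N k) + 1 ≤ aN N (k + 1) := by
  have h1 : aN N (k + 1) = (Q N * Q N + 1) * aN N k := by
    rw [aN, aN, pow_succ]
    have h2 : (((N - 1) ^ 2 + 1 : ℕ) : ℝ≥0∞) = Q N * Q N + 1 := by
      rw [Q]; push_cast; ring
    rw [h2]; ring
  rw [h1]
  calc Q N * (Q N * aN N k) + 1 ≤ Q N * (Q N * aN N k) + aN N k :=
        add_le_add (le_refl _) (aN_ge_one k)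
    _ = (Q N * Q N + 1) * aN N k := by ring

lemma gap_d0 (hN : 3 ≤ N) : (0 : ℝ≥0∞) + 1 ≤ (N : ℝ≥0∞) := by
  rw [zero_add]
  exact_mod_cast (by omega : 1 ≤ N)

lemma marg_invariant (α α' : Measure (Fin N → ℕ))
    (hmarg : ∀ i : Fin N, Measure.map (fun x : Fin N → ℕ => x i) α'
      = Measure.map (fun x : Fin N → ℕ => x i) α) (φ : ℕ → ℝ≥0∞) :
    ∫⁻ x, (∑ i, φ (x i)) ∂α' = ∫⁻ x, (∑ i, φ (x i)) ∂α := by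
  rw [lintegral_finset_sum _ (fun i _ => measurable_of_countable _),
    lintegral_finset_sum _ (fun i _ => measurable_of_countable _)]
  refine Finset.sum_congr rfl fun i _ => ?_
  calc ∫⁻ x, φ (x i) ∂α'
      = ∫⁻ y, φ y ∂(Measure.map (fun x : Fin N → ℕ => x i) α') :=
        (lintegral_map (measurable_of_countable φ) (measurable_of_countable _)).symm
    _ = ∫⁻ y, φ y ∂(Measure.map (fun x : Fin N → ℕ => x i) α) := by rw [hmarg i]
    _ = ∫⁻ x, φ (x i) ∂α :=
        lintegral_map (measurable_of_countable φ) (measurable_of_countable _)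

lemma tsum_singleton_eq_one {α : Type*} [MeasurableSpace α] [Countable α]
    [MeasurableSingletonClass α] (ρ : Measure α) [IsProbabilityMeasure ρ] :
    ∑' x : α, ρ {x} = 1 := by
  have h3 := Measure.tsum_indicator_apply_singleton ρ Set.univ MeasurableSet.univ
  simp only [Set.indicator_univ] at h3
  rw [h3, measure_univ]

lemma mono (hN : 3 ≤ N) (α α' : Measure (Fin N → ℕ)) (hα : IsProbabilityMeasure α)
    (hα' : IsProbabilityMeasure α') (hfin : ({x | α {x} ≠ 0}).Finite) (hac : α ≪ γm N)
    (hmarg : ∀ i : Fin N, Measure.map (fun x : Fin N → ℕ => x i) α'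
      = Measure.map (fun x : Fin N → ℕ => x i) α) :
    ∫⁻ x, c N x ∂α ≤ ∫⁻ x, c N x ∂α' := by
  classical
  have hsupp : ∀ x : Fin N → ℕ, α {x} ≠ 0 → ∃ k j, x = pt N (2 * k) j := by
    intro x hx
    by_contra hcon
    apply hx
    apply hac
    rw [γm_apply]
    refine ENNReal.tsum_eq_zero.2 fun k => Finset.sum_eq_zero fun j _ => if_neg ?_
    simp only [Set.mem_singleton_iff]
    exact fun he => hcon ⟨k, j, he.symm⟩
  have hcα : ∫⁻ x, c N x ∂α = 2 := by
    rw [lintegral_countable']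
    have h1 : ∀ x : Fin N → ℕ, c N x * α {x} = 2 * α {x} := by
      intro x
      by_cases hx : α {x} = 0
      · rw [hx, mul_zero, mul_zero]
      · obtain ⟨k, j, rfl⟩ := hsupp x hx
        rw [c_even]
    rw [tsum_congr h1, ENNReal.tsum_mul_left, tsum_singleton_eq_one α, mul_one]
  rw [hcα]
  by_cases hW : ∀ x : Fin N → ℕ, (¬ ∃ k j, x = pt N (2 * k) j) →
      (¬ ((∃ k j, x = pt N (2 * k + 1) j) ∨ x = d0 N)) → α' {x} = 0
  case neg =>
    rw [not_forall] at hW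
    obtain ⟨x₀, hx₀⟩ := hW
    rw [Classical.not_imp] at hx₀
    obtain ⟨h1, hx₀⟩ := hx₀
    rw [Classical.not_imp] at hx₀
    obtain ⟨h2, h3⟩ := hx₀
    have htop : ∫⁻ x, c N x ∂α' = ⊤ := by
      refine top_unique ?_
      rw [lintegral_countable']
      refine le_trans ?_ (ENNReal.le_tsum x₀)
      rw [c_top h1 h2, ENNReal.top_mul h3]
    rw [htop]
    exact le_top
  case pos =>
    have hIp := marg_invariant α α' hmarg (φp N)
    have hIm := marg_invariant α α' hmarg (φm N)
    have hαpm : ∫⁻ x, (∑ i, φp N (x i)) ∂α = ∫⁻ x, (∑ i, φm N (x i)) ∂α := by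
      rw [lintegral_countable', lintegral_countable']
      refine tsum_congr fun x => ?_
      by_cases hx : α {x} = 0
      · rw [hx, mul_zero, mul_zero]
      · obtain ⟨k, j, rfl⟩ := hsupp x hx
        rw [Φp_evenpt, Φm_evenpt]
    have hfinA : ∫⁻ x, (∑ i, φp N (x i)) ∂α ≠ ⊤ := by
      rw [lintegral_countable']
      have h4 : ∀ x ∉ hfin.toFinset, (∑ i, φp N (x i)) * α {x} = 0 := by
        intro x hx
        simp only [Set.Finite.mem_toFinset, Set.mem_setOf_eq, not_not] at hx
        rw [hx, mul_zero]
      rw [tsum_eq_sum h4]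
      refine (ENNReal.sum_lt_top.2 fun x _ => ?_).ne
      refine ENNReal.mul_lt_top ?_ ?_
      · exact (ENNReal.sum_lt_top.2 fun i _ => (φp_ne_top _).lt_top)
      · exact (measure_ne_top α _).lt_top
    have hβ : α' {x : Fin N → ℕ | (∃ k j, x = pt N (2 * k + 1) j) ∨ x = d0 N} = 0 := by
      have hkey : ∫⁻ x, (∑ i, φm N (x i)) ∂α'
          + α' {x : Fin N → ℕ | (∃ k j, x = pt N (2 * k + 1) j) ∨ x = d0 N}
          ≤ ∫⁻ x, (∑ i, φp N (x i)) ∂α' := by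
        rw [lintegral_countable', lintegral_countable',
          ← Measure.tsum_indicator_apply_singleton α' _ (meall _), ← ENNReal.tsum_add]
        refine ENNReal.tsum_le_tsum fun x => ?_
        by_cases hxE : ∃ k j, x = pt N (2 * k) j
        · obtain ⟨k, j, rfl⟩ := hxE
          have hxG : pt N (2 * k) j ∉
              {x : Fin N → ℕ | (∃ k j, x = pt N (2 * k + 1) j) ∨ x = d0 N} := by
            rintro (⟨k', j', he⟩ | he)
            · have := (pt_inj hN he).1
              omega
            · exact pt_ne_d0 he
          rw [Set.indicator_of_notMem hxG, add_zero, Φp_evenpt, Φm_evenpt]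
        · by_cases hxG : x ∈ {x : Fin N → ℕ | (∃ k j, x = pt N (2 * k + 1) j) ∨ x = d0 N}
          · rw [Set.indicator_of_mem hxG]
            have hgap : (∑ i, φm N (x i)) + 1 ≤ ∑ i, φp N (x i) := by
              rcases hxG with ⟨k, j, rfl⟩ | rfl
              · rw [Φm_oddpt, Φp_oddpt]
                exact gap_odd hN k
              · rw [Φm_d0pt, Φp_d0pt]
                exact gap_d0 hN
            calc (∑ i, φm N (x i)) * α' {x} + α' {x}
                = ((∑ i, φm N (x i)) + 1) * α' {x} := by ring
              _ ≤ (∑ i, φp N (x i)) * α' {x} := mul_le_mul_left hgap _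
          · rw [hW x hxE hxG, Set.indicator_of_notMem hxG]
            simp
      rw [hIp, hIm, ← hαpm] at hkey
      have h5 : ∫⁻ x, (∑ i, φp N (x i)) ∂α
          + α' {x : Fin N → ℕ | (∃ k j, x = pt N (2 * k + 1) j) ∨ x = d0 N}
          ≤ ∫⁻ x, (∑ i, φp N (x i)) ∂α + 0 := by
        rw [add_zero]
        exact hkey
      exact le_zero_iff.1 ((ENNReal.add_le_add_iff_left hfinA).1 h5)
    have hc' : ∫⁻ x, c N x ∂α' = 2 := by
      rw [lintegral_countable']
      have h1 : ∀ x : Fin N → ℕ, c N x * α' {x} = 2 * α' {x} := by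
        intro x
        by_cases hxE : ∃ k j, x = pt N (2 * k) j
        · obtain ⟨k, j, rfl⟩ := hxE
          rw [c_even]
        · by_cases hxG : x ∈ {x : Fin N → ℕ | (∃ k j, x = pt N (2 * k + 1) j) ∨ x = d0 N}
          · have hz : α' {x} = 0 := measure_mono_null (Set.singleton_subset_iff.2 hxG) hβ
            rw [hz, mul_zero, mul_zero]
          · rw [hW x hxE hxG, mul_zero, mul_zero]
      rw [tsum_congr h1, ENNReal.tsum_mul_left, tsum_singleton_eq_one α', mul_one]
    rw [hc']

end Mono

end

end Stmt18Aux

open Stmt18Aux in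
theorem stmt18 (N : ℕ) (hN : 3 ≤ N) :
    ∃ (X : Type) (_ : MeasurableSpace X) (_ : MeasurableSingletonClass X),
      Countable X ∧
      ∃ (c : (Fin N → X) → ℝ≥0∞) (μ : Measure X) (γ : Measure (Fin N → X)),
        IsProbabilityMeasure μ ∧ IsProbabilityMeasure γ ∧
        -- c takes values in (0, ∞]
        (∀ x, 0 < c x) ∧
        -- γ is symmetric
        (∀ σ : Equiv.Perm (Fin N), Measure.map (fun x => x ∘ σ) γ = γ) ∧
        -- all marginals of γ equal μ
        (∀ i : Fin N, Measure.map (fun x => x i) γ = μ) ∧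
        -- γ has finite cost
        (∫⁻ x, c x ∂γ < ⊤) ∧
        -- γ is c-cyclically monotone: every finitely supported probability
        -- measure α ≪ γ minimizes cost among plans with the same marginals
        (∀ α α' : Measure (Fin N → X), IsProbabilityMeasure α →
          IsProbabilityMeasure α' → ({x | α {x} ≠ 0}).Finite → α ≪ γ →
          (∀ i : Fin N, Measure.map (fun x => x i) α'
              = Measure.map (fun x => x i) α) →
          ∫⁻ x, c x ∂α ≤ ∫⁻ x, c x ∂α') ∧
        -- γ is not optimal
        (∃ γ' : Measure (Fin N → X), IsProbabilityMeasure γ' ∧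
          (∀ i : Fin N, Measure.map (fun x => x i) γ' = μ) ∧
          ∫⁻ x, c x ∂γ' < ∫⁻ x, c x ∂γ) := by
  refine ⟨ℕ, inferInstance, inferInstance, inferInstance, Stmt18Aux.c N, μm N, γm N,
    μm_prob hN, γm_prob hN, c_pos, γm_symm, map_γm hN, ?_,
    fun α α' h1 h2 h3 h4 h5 => mono hN α α' h1 h2 h3 h4 h5,
    ⟨γ'm N, γ'm_prob hN, map_γ'm hN, ?_⟩⟩
  · rw [cost_γm hN]
    norm_num
  · rw [cost_γ'm hN, cost_γm hN]
    norm_num
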